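/- Let B and C be finite graphs and r ≥ 2 an integer such that m(C) < (1/2)·r·η*(B), where m(C) = max over nonempty subgraphs D ⊆ C of e(D)/v(D) (edge count over vertex count), and η*(B) = max over nonempty subgraphs B' ⊆ B of the minimum vertex degree of B'. Then there exists an r-coloring of the vertices of C such that no subgraph of C isomorphic to B has all its vertices monochromatic. -/

import Mathlib

open Finset

/-- The number of edges of the graph `G` with both endpoints in the
vertex set `X`. -/
def edgesIn {V : Type*} [Fintype V] [DecidableEq V] (G : SimpleGraph V)
    [DecidableRel G.Adj] (X : Finset V) : ℕ :=
  (G.edgeFinset.filter (fun e => ∃ a ∈ X, ∃ b ∈ X, e = s(a, b))).card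

/-- Degree sum bound: sum of degrees within `D` is at most twice `edgesIn`. -/
lemma sum_deg_le {W : Type*} [Fintype W] [DecidableEq W] (C : SimpleGraph W)
    [DecidableRel C.Adj] (D : Finset W) :
    ∑ v ∈ D, (D.filter (fun u => C.Adj v u)).card ≤ 2 * edgesIn C D := by
  have hsum : ∑ v ∈ D, (D.filter (fun u => C.Adj v u)).card
      = ((D ×ˢ D).filter (fun p => C.Adj p.1 p.2)).card := by
    simp only [Finset.card_filter, Finset.sum_product]
  rw [hsum]
  apply Finset.card_le_mul_card_image_of_maps_to
    (f := fun p : W × W => s(p.1, p.2))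
    (t := C.edgeFinset.filter (fun e => ∃ a ∈ D, ∃ b ∈ D, e = s(a, b)))
  · rintro ⟨a, b⟩ hp
    simp only [Finset.mem_filter, Finset.mem_product] at hp
    simp only [Finset.mem_filter, SimpleGraph.mem_edgeFinset]
    exact ⟨hp.2, a, hp.1.1, b, hp.1.2, rfl⟩
  · intro e he
    induction e using Sym2.ind with
    | _ x y =>
      have hsub : ((D ×ˢ D).filter (fun p => C.Adj p.1 p.2)).filter
          (fun p => s(p.1, p.2) = s(x, y)) ⊆ {(x, y), (y, x)} := by
        rintro ⟨a, b⟩ hp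
        simp only [Finset.mem_filter] at hp
        have := hp.2
        rw [Sym2.eq_iff] at this
        rcases this with ⟨h1, h2⟩ | ⟨h1, h2⟩ <;> subst h1 <;> subst h2 <;> simp
      calc _ ≤ ({(x, y), (y, x)} : Finset (W × W)).card := Finset.card_le_card hsub
        _ ≤ 2 := Finset.card_insert_le _ _ |>.trans (by simp)

/-- if `m(C) < (1/2)·r·η*(B)` then there is a vertex `r`-coloring
of `C` with no monochromatic copy of `B`.  The hypothesis is expressed by a
nonempty vertex set `S` of `B` (witnessing `η*(B)`) whose minimum degree in the
induced subgraph is at least `d`, such that every nonempty `D ⊆ C` has density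
`e(D)/v(D) < (1/2)·r·d`. -/
theorem stmt3 {V W : Type*} [Fintype V] [Fintype W] [DecidableEq V] [DecidableEq W]
    (B : SimpleGraph V) (C : SimpleGraph W)
    [DecidableRel B.Adj] [DecidableRel C.Adj]
    (r : ℕ) (hr : 2 ≤ r) (d : ℕ) (S : Finset V) (hS : S.Nonempty)
    (hd : ∀ v ∈ S, d ≤ (S.filter (fun w => B.Adj v w)).card)
    (hm : ∀ D : Finset W, D.Nonempty →
      (edgesIn C D : ℝ) / (D.card : ℝ) < (1 / 2) * (r : ℝ) * (d : ℝ)) :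
    ∃ c : W → Fin r, ∀ f : B →g C, Function.Injective f →
      ¬ ∀ v w : V, c (f v) = c (f w) := by
  have hr0 : 0 < r := by omega
  -- every nonempty D has a vertex of small degree
  have hdeg : ∀ D : Finset W, D.Nonempty → ∃ w ∈ D,
      (D.filter (fun u => C.Adj w u)).card < r * d := by
    intro D hD
    by_contra h
    push_neg at h
    have h1 : 2 * edgesIn C D < r * d * D.card := by
      have := hm D hD
      have hc : (0:ℝ) < (D.card : ℝ) := by
        exact_mod_cast Finset.card_pos.mpr hD
      rw [div_lt_iff₀ hc] at this
      have : (2 * edgesIn C D : ℝ) < (r * d * D.card : ℝ) := by nlinarith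
      exact_mod_cast this
    have h2 : r * d * D.card ≤ ∑ v ∈ D, (D.filter (fun u => C.Adj v u)).card := by
      calc r * d * D.card = ∑ _v ∈ D, r * d := by rw [Finset.sum_const, smul_eq_mul, mul_comm]
        _ ≤ _ := Finset.sum_le_sum h
    have := sum_deg_le C D
    omega
  -- key claim by strong induction
  have key : ∀ D : Finset W, ∃ c : W → Fin r, ∀ T ⊆ D, T.Nonempty →
      (∀ x ∈ T, ∀ y ∈ T, c x = c y) → ∃ w ∈ T, (T.filter (fun u => C.Adj w u)).card < d := by
    intro D
    induction D using Finset.strongInduction with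
    | _ D ih =>
      rcases D.eq_empty_or_nonempty with rfl | hD
      · exact ⟨fun _ => ⟨0, hr0⟩, fun T hT hTne _ => absurd (Finset.subset_empty.mp hT)
          (Finset.nonempty_iff_ne_empty.mp hTne)⟩
      · obtain ⟨w₀, hw₀D, hw₀deg⟩ := hdeg D hD
        obtain ⟨c', hc'⟩ := ih (D.erase w₀) (Finset.erase_ssubset hw₀D)
        set N := (D.erase w₀).filter (fun u => C.Adj w₀ u) with hN
        have hNcard : N.card < r * d := by
          apply lt_of_le_of_lt (Finset.card_le_card ?_) hw₀deg
          exact Finset.filter_subset_filter _ (Finset.erase_subset _ _)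
        have hpig : ∃ i : Fin r, (N.filter (fun u => c' u = i)).card < d := by
          by_contra h
          push_neg at h
          have : r * d ≤ N.card := by
            have heq : N.card = ∑ i ∈ Finset.univ, (N.filter (fun u => c' u = i)).card :=
              Finset.card_eq_sum_card_fiberwise (fun x _ => Finset.mem_univ _)
            calc r * d = ∑ _i ∈ (Finset.univ : Finset (Fin r)), d := by simp [mul_comm]
              _ ≤ ∑ i ∈ Finset.univ, (N.filter (fun u => c' u = i)).card :=
                  Finset.sum_le_sum (fun i _ => h i)
              _ = N.card := heq.symm
          omega
        obtain ⟨i, hi⟩ := hpig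
        refine ⟨Function.update c' w₀ i, ?_⟩
        intro T hT hTne hmono
        by_cases hw₀T : w₀ ∈ T
        · refine ⟨w₀, hw₀T, ?_⟩
          apply lt_of_le_of_lt (Finset.card_le_card ?_) hi
          intro u hu
          simp only [Finset.mem_filter] at hu ⊢
          have hune : u ≠ w₀ := fun h => by
            subst h; exact C.loopless.irrefl u hu.2
          have huD : u ∈ D.erase w₀ := Finset.mem_erase.mpr ⟨hune, hT hu.1⟩
          refine ⟨Finset.mem_filter.mpr ⟨huD, hu.2⟩, ?_⟩
          have := hmono u hu.1 w₀ hw₀T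
          rwa [Function.update_of_ne hune, Function.update_self] at this
        · have hTsub : T ⊆ D.erase w₀ := fun x hx =>
            Finset.mem_erase.mpr ⟨fun h => hw₀T (h ▸ hx), hT hx⟩
          apply hc' T hTsub hTne
          intro x hx y hy
          have hx' := (Finset.mem_erase.mp (hTsub hx)).1
          have hy' := (Finset.mem_erase.mp (hTsub hy)).1
          have := hmono x hx y hy
          rwa [Function.update_of_ne hx', Function.update_of_ne hy'] at this
  obtain ⟨c, hc⟩ := key Finset.univ
  refine ⟨c, ?_⟩
  intro f hf hmono
  have hT : (S.image f).Nonempty := hS.image f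
  obtain ⟨w, hwT, hwdeg⟩ := hc (S.image f) (Finset.subset_univ _) hT
    (fun x hx y hy => by
      simp only [Finset.mem_image] at hx hy
      obtain ⟨a, _, rfl⟩ := hx; obtain ⟨b, _, rfl⟩ := hy
      exact hmono a b)
  obtain ⟨v, hvS, rfl⟩ := Finset.mem_image.mp hwT
  have hle : d ≤ ((S.image f).filter (fun u => C.Adj (f v) u)).card := by
    calc d ≤ (S.filter (fun w => B.Adj v w)).card := hd v hvS
      _ = ((S.filter (fun w => B.Adj v w)).image f).card :=
          (Finset.card_image_of_injective _ hf).symm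
      _ ≤ _ := by
          apply Finset.card_le_card
          intro u hu
          simp only [Finset.mem_image, Finset.mem_filter] at hu ⊢
          obtain ⟨a, ⟨haS, hadj⟩, rfl⟩ := hu
          exact ⟨⟨a, haS, rfl⟩, f.map_adj hadj⟩
  omega
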